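/- For every k ≥ 1 and every n ≥ 1, the set S_k of density matrices on ℂ^n ⊗ ℂ^n with Schmidt number at most k is a compact subset of the space of complex matrices indexed by Fin n × Fin n. -/

import Mathlib

open Matrix BigOperators
open scoped ComplexOrder

/-- The `n × n` matrix `M_ψ` associated to a vector `ψ ∈ ℂ^α ⊗ ℂ^β`,
with entries `(M_ψ)_{ij} = ⟨e_i ⊗ e_j, ψ⟩ = ψ (i, j)`. -/
def matOfVec {α β : Type*} (ψ : α × β → ℂ) : Matrix α β ℂ :=
  Matrix.of fun i j => ψ (i, j)

/-- The Schmidt rank of a bipartite vector is the rank of its associated matrix. -/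
noncomputable def schmidtRank {α β : Type*} [Fintype β] (ψ : α × β → ℂ) : ℕ :=
  (matOfVec ψ).rank

/-- `ψ` is a unit vector. -/
def IsUnitVec {γ : Type*} [Fintype γ] (ψ : γ → ℂ) : Prop :=
  ∑ x, Complex.normSq (ψ x) = 1

/-- The outer product `|ψ⟩⟨ψ|`. -/
def outer {γ : Type*} (ψ : γ → ℂ) : Matrix γ γ ℂ :=
  Matrix.of fun x y => ψ x * star (ψ y)

/-- `ρ ∈ S_k`: `ρ` admits a decomposition `ρ = ∑ i, p i • |ψ i⟩⟨ψ i|` with `p i ≥ 0`,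
`∑ i, p i = 1`, each `ψ i` a unit vector of Schmidt rank at most `k`. -/
def InSchmidtClass {α : Type*} [Fintype α] (k : ℕ)
    (ρ : Matrix (α × α) (α × α) ℂ) : Prop :=
  ∃ (m : ℕ) (p : Fin m → ℝ) (ψ : Fin m → α × α → ℂ),
    (∀ i, 0 ≤ p i) ∧ (∑ i, p i) = 1 ∧
    (∀ i, IsUnitVec (ψ i)) ∧ (∀ i, schmidtRank (ψ i) ≤ k) ∧
    ρ = ∑ i, (p i : ℂ) • outer (ψ i)

/-- The map `1 ⊗ Λ`, applying `Λ` to each block of a matrix indexed by `γ × Fin n`. -/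
def blockMap {γ : Type*} {n m : ℕ}
    (Λ : Matrix (Fin n) (Fin n) ℂ → Matrix (Fin m) (Fin m) ℂ)
    (X : Matrix (γ × Fin n) (γ × Fin n) ℂ) : Matrix (γ × Fin m) (γ × Fin m) ℂ :=
  Matrix.of fun a b => Λ (Matrix.of fun s t => X (a.1, s) (b.1, t)) a.2 b.2

/-- `Λ` is Hermiticity-preserving: `Λ(X†) = Λ(X)†`. -/
def HermPreserving {n m : ℕ}
    (Λ : Matrix (Fin n) (Fin n) ℂ → Matrix (Fin m) (Fin m) ℂ) : Prop :=
  ∀ X, Λ Xᴴ = (Λ X)ᴴ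

/-- `Λ` is `k`-positive: `(1 ⊗ Λ)(|ψ⟩⟨ψ|)` is positive semidefinite for every
unit vector `ψ ∈ ℂ^N ⊗ ℂ^N` of Schmidt rank at most `k`. -/
def kPositive {N : ℕ} (k : ℕ)
    (Λ : Matrix (Fin N) (Fin N) ℂ → Matrix (Fin N) (Fin N) ℂ) : Prop :=
  ∀ ψ : Fin N × Fin N → ℂ, IsUnitVec ψ → schmidtRank ψ ≤ k →
    (blockMap Λ (outer ψ)).PosSemidef

/- ===== auxiliary lemmas ===== -/

section Aux

open Module

lemma rank_le_iff_det_gram {m k : ℕ} (M : Matrix (Fin m) (Fin m) ℂ) :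
    M.rank ≤ k ↔ ∀ f : Fin (k+1) → Fin m,
      ((M.submatrix id f)ᴴ * (M.submatrix id f)).det = 0 := by
  constructor
  · intro h f
    by_contra hdet
    have hunit : IsUnit ((M.submatrix id f)ᴴ * (M.submatrix id f)) :=
      (Matrix.isUnit_iff_isUnit_det _).mpr (isUnit_iff_ne_zero.mpr hdet)
    have h1 : ((M.submatrix id f)ᴴ * (M.submatrix id f)).rank = k + 1 := by
      rw [Matrix.rank_of_isUnit _ hunit, Fintype.card_fin]
    have h2 : ((M.submatrix id f)ᴴ * (M.submatrix id f)).rank = (M.submatrix id f).rank :=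
      Matrix.rank_conjTranspose_mul_self _
    have h3 : (M.submatrix id f).rank ≤ M.rank := by
      have hMP : M * (1 : Matrix (Fin m) (Fin m) ℂ).submatrix (Equiv.refl (Fin m)) f
          = M.submatrix id f := by
        rw [Matrix.mul_submatrix_one]
        rfl
      rw [← hMP]
      exact Matrix.rank_mul_le_left _ _
    omega
  · intro h
    by_contra hrank
    push_neg at hrank
    have hr : k + 1 ≤ Module.finrank ℂ (Submodule.span ℂ (Set.range Mᵀ)) := by
      rw [show Set.range Mᵀ = Set.range M.col from rfl, ← Matrix.rank_eq_finrank_span_cols]; omega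
    obtain ⟨b, hbsub, hbspan, hbind⟩ := exists_linearIndependent ℂ (Set.range Mᵀ)
    have hbfin : b.Finite := (Set.finite_range Mᵀ).subset hbsub
    haveI : Fintype b := hbfin.fintype
    have hcard : k + 1 ≤ Fintype.card b := by
      have := finrank_span_set_eq_card (s := b) hbind
      rw [hbspan] at this
      rw [Set.toFinset_card] at this
      omega
    obtain ⟨e⟩ := Function.Embedding.nonempty_of_card_le (by simpa using hcard :
      Fintype.card (Fin (k+1)) ≤ Fintype.card b)
    have hcol : ∀ i : Fin (k+1), ∃ j : Fin m, Mᵀ j = (e i : Fin m → ℂ) := fun i =>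
      hbsub (e i).2
    choose f hf using hcol
    have hind : LinearIndependent ℂ (fun i : Fin (k+1) => Mᵀ (f i)) := by
      have : (fun i : Fin (k+1) => Mᵀ (f i)) = Subtype.val ∘ (fun i => e i) := by
        funext i; rw [hf i]; rfl
      rw [this]
      exact hbind.comp (fun i => e i) e.injective
    set N := M.submatrix id f with hN
    have hNt : Nᵀ = fun i => Mᵀ (f i) := by
      funext i j; rfl
    have hrkNt : Nᵀ.rank = k + 1 := by
      have : LinearIndependent ℂ Nᵀ := by rw [hNt]; exact hind
      simpa using (LinearIndependent.rank_matrix (M := Nᵀ) this)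
    have hrkN : N.rank = k + 1 := by rw [← Matrix.rank_transpose]; exact hrkNt
    have hrkG : (Nᴴ * N).rank = k + 1 := by
      rw [Matrix.rank_conjTranspose_mul_self]; exact hrkN
    have hsurj : Function.Surjective (Nᴴ * N).mulVec := by
      have htop : LinearMap.range (Nᴴ * N).mulVecLin = ⊤ := by
        apply Submodule.eq_top_of_finrank_eq
        rw [show Module.finrank ℂ (Fin (k+1) → ℂ) = k + 1 by
          rw [Module.finrank_fintype_fun_eq_card]; simp]
        exact hrkG
      intro v
      obtain ⟨w, hw⟩ := (LinearMap.range_eq_top.mp htop) v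
      exact ⟨w, hw⟩
    have := (Matrix.mulVec_surjective_iff_isUnit.mp hsurj)
    have hdet := (Matrix.isUnit_iff_isUnit_det _).mp this
    exact hdet.ne_zero (h f)

lemma isClosed_rank_le {m k : ℕ} :
    IsClosed {M : Matrix (Fin m) (Fin m) ℂ | M.rank ≤ k} := by
  have : {M : Matrix (Fin m) (Fin m) ℂ | M.rank ≤ k} =
      ⋂ f : Fin (k+1) → Fin m,
        {M | ((M.submatrix id f)ᴴ * (M.submatrix id f)).det = 0} := by
    ext M
    simp only [Set.mem_setOf_eq, Set.mem_iInter]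
    exact rank_le_iff_det_gram M
  rw [this]
  refine isClosed_iInter fun f => ?_
  have hc : Continuous fun M : Matrix (Fin m) (Fin m) ℂ =>
      ((M.submatrix id f)ᴴ * (M.submatrix id f)).det := by
    have hsub : Continuous fun M : Matrix (Fin m) (Fin m) ℂ => M.submatrix id f :=
      continuous_id.matrix_submatrix _ _
    exact ((hsub.matrix_conjTranspose).matrix_mul hsub).matrix_det
  exact isClosed_singleton.preimage hc

lemma myIsCompact_convexHull {V : Type*} [AddCommGroup V] [Module ℝ V]
    [TopologicalSpace V] [IsTopologicalAddGroup V] [ContinuousSMul ℝ V]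
    [FiniteDimensional ℝ V] {s : Set V} (hs : IsCompact s) :
    IsCompact (convexHull ℝ s) := by
  rcases s.eq_empty_or_nonempty with rfl | ⟨x₀, hx₀⟩
  · simp
  classical
  set D := finrank ℝ V + 1 with hD
  set K : Set ((Fin D → ℝ) × (Fin D → V)) :=
    (stdSimplex ℝ (Fin D)) ×ˢ (Set.univ.pi fun _ => s) with hK
  have hKc : IsCompact K :=
    (isCompact_stdSimplex _ _).prod (isCompact_univ_pi fun _ => hs)
  have hf : Continuous fun p : (Fin D → ℝ) × (Fin D → V) => ∑ i, p.1 i • p.2 i := by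
    refine continuous_finset_sum _ fun i _ => ?_
    exact ((continuous_apply i).comp continuous_fst).smul
      ((continuous_apply i).comp continuous_snd)
  have heq : convexHull ℝ s =
      (fun p : (Fin D → ℝ) × (Fin D → V) => ∑ i, p.1 i • p.2 i) '' K := by
    apply Set.Subset.antisymm
    · intro x hx
      obtain ⟨ι, hι, z, w, hzs, haff, hw0, hw1, hsum⟩ :=
        eq_pos_convex_span_of_mem_convexHull hx
      have hcard : Fintype.card ι ≤ D := by
        calc Fintype.card ι ≤ finrank ℝ (vectorSpan ℝ (Set.range z)) + 1 :=
              haff.card_le_finrank_succ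
          _ ≤ D := by
              have := Submodule.finrank_le (vectorSpan ℝ (Set.range z))
              omega
      obtain ⟨e⟩ := Function.Embedding.nonempty_of_card_le
        (by simpa using hcard : Fintype.card ι ≤ Fintype.card (Fin D))
      set w' : Fin D → ℝ := Function.extend e w 0 with hw'
      set z' : Fin D → V := Function.extend e z fun _ => x₀ with hz'
      have hoffimg : ∀ j : Fin D, j ∉ Finset.univ.image e → w' j = 0 := by
        intro j hj
        have hne : ¬∃ i, e i = j := by
          rintro ⟨i, rfl⟩
          exact hj (Finset.mem_image_of_mem _ (Finset.mem_univ i))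
        rw [hw', Function.extend_apply' _ _ _ hne]
        rfl
      have hw'nonneg : ∀ j, 0 ≤ w' j := by
        intro j
        rcases em (∃ i, e i = j) with ⟨i, rfl⟩ | hne
        · rw [hw', e.injective.extend_apply]
          exact (hw0 i).le
        · rw [hw', Function.extend_apply' _ _ _ hne]
          rfl
      have hw'sum : ∑ j, w' j = 1 := by
        have h1 : ∑ j, w' j = ∑ j ∈ Finset.univ.image e, w' j :=
          (Finset.sum_subset (Finset.subset_univ _) fun j _ hj => hoffimg j hj).symm
        rw [h1, Finset.sum_image (fun a _ b _ h => e.injective h)]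
        simp only [hw', e.injective.extend_apply]
        exact hw1
      have hz'mem : ∀ j, z' j ∈ s := by
        intro j
        rcases em (∃ i, e i = j) with ⟨i, rfl⟩ | hne
        · rw [hz', e.injective.extend_apply]
          exact hzs ⟨i, rfl⟩
        · rw [hz', Function.extend_apply' _ _ _ hne]
          exact hx₀
      have hsum' : ∑ j, w' j • z' j = x := by
        have h1 : ∑ j, w' j • z' j = ∑ j ∈ Finset.univ.image e, w' j • z' j := by
          refine (Finset.sum_subset (Finset.subset_univ _) fun j _ hj => ?_).symm
          rw [hoffimg j hj, zero_smul]
        rw [h1, Finset.sum_image (fun a _ b _ h => e.injective h)]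
        simp only [hw', hz', e.injective.extend_apply]
        exact hsum
      exact ⟨(w', z'), ⟨⟨hw'nonneg, hw'sum⟩, fun j _ => hz'mem j⟩, hsum'⟩
    · rintro _ ⟨⟨w, z⟩, ⟨hw, hz⟩, rfl⟩
      refine Convex.sum_mem (convex_convexHull ℝ s) (fun i _ => hw.1 i) hw.2 ?_
      intro i _
      exact subset_convexHull ℝ s (hz i (Set.mem_univ i))
  rw [heq]
  exact hKc.image hf

lemma coe_smul_outer {γ : Type*} (r : ℝ) (X : Matrix γ γ ℂ) :
    (r : ℂ) • X = r • X := by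
  ext a b
  simp [Matrix.smul_apply, Complex.real_smul]

lemma convex_inSchmidtClass {α : Type*} [Fintype α] (k : ℕ) :
    Convex ℝ {ρ : Matrix (α × α) (α × α) ℂ | InSchmidtClass k ρ} := by
  rintro ρ ⟨m₁, p, ψ, hp0, hp1, hψu, hψr, rfl⟩ σ ⟨m₂, q, φ, hq0, hq1, hφu, hφr, rfl⟩
    a b ha hb hab
  refine ⟨m₁ + m₂, Fin.append (fun i => a * p i) (fun j => b * q j), Fin.append ψ φ,
    ?_, ?_, ?_, ?_, ?_⟩
  · intro i
    refine Fin.addCases (fun i => ?_) (fun i => ?_) i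
    · rw [Fin.append_left]; exact mul_nonneg ha (hp0 i)
    · rw [Fin.append_right]; exact mul_nonneg hb (hq0 i)
  · rw [Fin.sum_univ_add]
    simp only [Fin.append_left, Fin.append_right, ← Finset.mul_sum, hp1, hq1,
      mul_one, hab]
  · intro i
    refine Fin.addCases (fun i => ?_) (fun i => ?_) i
    · rw [Fin.append_left]; exact hψu i
    · rw [Fin.append_right]; exact hφu i
  · intro i
    refine Fin.addCases (fun i => ?_) (fun i => ?_) i
    · rw [Fin.append_left]; exact hψr i
    · rw [Fin.append_right]; exact hφr i
  · rw [Fin.sum_univ_add]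
    simp only [Fin.append_left, Fin.append_right]
    rw [Finset.smul_sum, Finset.smul_sum]
    congr 1
    · refine Finset.sum_congr rfl fun i _ => ?_
      rw [← smul_assoc, Complex.real_smul]
      norm_cast
    · refine Finset.sum_congr rfl fun i _ => ?_
      rw [← smul_assoc, Complex.real_smul]
      norm_cast

end Aux


/-- For `k ≥ 1`, `n ≥ 1`, the set `S_k` of density matrices on `ℂ^n ⊗ ℂ^n`
with Schmidt number at most `k` is compact. -/
theorem schmidt_class_isCompact {n k : ℕ} (hn : 1 ≤ n) (hk : 1 ≤ k) :
    IsCompact {ρ : Matrix (Fin n × Fin n) (Fin n × Fin n) ℂ | InSchmidtClass k ρ} := by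
  classical
  set V : Set (Fin n × Fin n → ℂ) := {ψ | IsUnitVec ψ ∧ schmidtRank ψ ≤ k} with hV
  have hVclosed : IsClosed V := by
    have h1 : IsClosed {ψ : Fin n × Fin n → ℂ | IsUnitVec ψ} := by
      have hc : Continuous fun ψ : Fin n × Fin n → ℂ => ∑ x, Complex.normSq (ψ x) :=
        continuous_finset_sum _ fun x _ =>
          Complex.continuous_normSq.comp (continuous_apply x)
      exact isClosed_eq hc continuous_const
    have h2 : IsClosed {ψ : Fin n × Fin n → ℂ | schmidtRank ψ ≤ k} := by
      have hmat : Continuous fun ψ : Fin n × Fin n → ℂ => matOfVec ψ :=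
        continuous_matrix fun i j => continuous_apply (i, j)
      exact isClosed_rank_le.preimage hmat
    exact h1.inter h2
  have hVbdd : Bornology.IsBounded V := by
    refine (Metric.isBounded_closedBall (x := (0 : Fin n × Fin n → ℂ)) (r := 1)).subset ?_
    intro ψ hψ
    rw [Metric.mem_closedBall, dist_zero_right]
    refine (pi_norm_le_iff_of_nonneg zero_le_one).mpr fun x => ?_
    have hle : Complex.normSq (ψ x) ≤ 1 := by
      have := Finset.single_le_sum (f := fun y => Complex.normSq (ψ y))
        (fun y _ => Complex.normSq_nonneg _) (Finset.mem_univ x)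
      rw [hψ.1] at this
      exact this
    have h0 : Complex.normSq (ψ x) = ‖ψ x‖ ^ 2 := by
      rw [Complex.normSq_eq_norm_sq]
    nlinarith [norm_nonneg (ψ x)]
  have hVc : IsCompact V := Metric.isCompact_of_isClosed_isBounded hVclosed hVbdd
  have houter : Continuous fun ψ : Fin n × Fin n → ℂ => outer ψ :=
    continuous_matrix fun x y => (continuous_apply x).mul (continuous_apply y).star
  have hEc : IsCompact ((fun ψ : Fin n × Fin n → ℂ => outer ψ) '' V) := hVc.image houter
  have hset : {ρ : Matrix (Fin n × Fin n) (Fin n × Fin n) ℂ | InSchmidtClass k ρ}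
      = convexHull ℝ ((fun ψ : Fin n × Fin n → ℂ => outer ψ) '' V) := by
    apply Set.Subset.antisymm
    · rintro ρ ⟨m, p, ψ, hp0, hp1, hψu, hψr, rfl⟩
      have hre : ∑ i, ((p i : ℂ)) • outer (ψ i) = ∑ i, p i • outer (ψ i) :=
        Finset.sum_congr rfl fun i _ => coe_smul_outer _ _
      rw [hre]
      exact Convex.sum_mem (convex_convexHull ℝ _) (fun i _ => hp0 i) hp1
        (fun i _ => subset_convexHull ℝ _ ⟨ψ i, ⟨hψu i, hψr i⟩, rfl⟩)
    · refine convexHull_min ?_ (convex_inSchmidtClass k)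
      rintro X ⟨ψ, ⟨hu, hr⟩, rfl⟩
      exact ⟨1, fun _ => 1, fun _ => ψ, fun _ => zero_le_one, by simp,
        fun _ => hu, fun _ => hr, by simp⟩
  rw [hset]
  exact myIsCompact_convexHull hEc
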